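/- Let G be a finite p-group with γ_3(G) = 1 and (G')^p = 1, such that |G'| = p^3, and let x ∈ G be such that |[x,G]| = p^2. Then there exist u, v ∈ G such that G' = ⟨[u,v], [x,u], [x,v]⟩. -/

import Mathlib

/-!
STATEMENT 19: Let G be a finite p-group with γ_3(G) = 1 and (G')^p = 1, such
that |G'| = p^3, and let x ∈ G be such that |[x,G]| = p^2.  Then there exist
u, v ∈ G such that G' = ⟨[u,v], [x,u], [x,v]⟩.

Here γ_3(G) = lowerCentralSeries G 2, (G')^p = sgPow (commutator G) p, and
[x,G] = ⟨[x,g] : g ∈ G⟩.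
-/

open scoped commutatorElement

/-- The subgroup `⟨h^n : h ∈ H⟩` generated by the `n`-th powers of elements of `H`. -/
def sgPow {G : Type*} [Group G] (H : Subgroup G) (n : ℕ) : Subgroup G :=
  Subgroup.closure ((· ^ n) '' (H : Set G))

/-- `[x,G] = ⟨[x,g] : g ∈ G⟩`. -/
def xGsub {G : Type*} [Group G] (x : G) : Subgroup G :=
  Subgroup.closure {y | ∃ g : G, y = ⁅x, g⁆}

section Aux
variable {G : Type*} [Group G]

/-- Bilinearity in the second argument, given all commutators are central. -/
lemma comm_mul_right (hc : ∀ a b k : G, ⁅a, b⁆ * k = k * ⁅a, b⁆) (a g h : G) :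
    ⁅a, g * h⁆ = ⁅a, g⁆ * ⁅a, h⁆ := by
  have h1 : ⁅a, g * h⁆ = ⁅a, g⁆ * (g * ⁅a, h⁆ * g⁻¹) := by
    simp only [commutatorElement_def]; group
  rw [h1, ← hc a h g, mul_inv_cancel_right]

lemma comm_mul_left (hc : ∀ a b k : G, ⁅a, b⁆ * k = k * ⁅a, b⁆) (g h a : G) :
    ⁅g * h, a⁆ = ⁅g, a⁆ * ⁅h, a⁆ := by
  have h1 : ⁅g * h, a⁆ = g * ⁅h, a⁆ * g⁻¹ * ⁅g, a⁆ := by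
    simp only [commutatorElement_def]; group
  rw [h1, ← hc h a g, mul_inv_cancel_right]
  exact hc h a _

/-- The map `g ↦ ⁅a, g⁆` as a monoid hom, when commutators are central. -/
def commHomR (hc : ∀ a b k : G, ⁅a, b⁆ * k = k * ⁅a, b⁆) (a : G) : G →* G where
  toFun g := ⁅a, g⁆
  map_one' := commutatorElement_one_right a
  map_mul' g h := comm_mul_right hc a g h

/-- The map `g ↦ ⁅g, a⁆` as a monoid hom, when commutators are central. -/
def commHomL (hc : ∀ a b k : G, ⁅a, b⁆ * k = k * ⁅a, b⁆) (a : G) : G →* G where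
  toFun g := ⁅g, a⁆
  map_one' := commutatorElement_one_left a
  map_mul' g h := comm_mul_left hc g h a

lemma mem_closure_pair_comm {a b : G} (hab : Commute a b) {z : G}
    (hz : z ∈ Subgroup.closure {a, b}) : ∃ i j : ℤ, z = a ^ i * b ^ j := by
  induction hz using Subgroup.closure_induction with
  | mem y hy =>
    rcases hy with rfl | rfl
    · exact ⟨1, 0, by simp⟩
    · exact ⟨0, 1, by simp⟩
  | one => exact ⟨0, 0, by simp⟩
  | mul y z hy hz ihy ihz =>
    obtain ⟨i, j, rfl⟩ := ihy
    obtain ⟨k, l, rfl⟩ := ihz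
    refine ⟨i + k, j + l, ?_⟩
    rw [zpow_add, zpow_add, mul_assoc, ← mul_assoc (b ^ j), ← (hab.zpow_zpow k j).eq]
    simp [mul_assoc]
  | inv y hy ihy =>
    obtain ⟨i, j, rfl⟩ := ihy
    refine ⟨-i, -j, ?_⟩
    rw [mul_inv_rev, zpow_neg, zpow_neg]
    exact ((hab.zpow_zpow i j).inv_inv).eq.symm

end Aux

theorem exists_three_commutator_generators
    {p : ℕ} (hp : p.Prime)
    {G : Type*} [Group G] [Finite G] (hG : IsPGroup p G)
    (h3 : (⊤ : Subgroup G).lowerCentralSeries 2 = ⊥)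
    (hexp : sgPow (commutator G) p = ⊥)
    (hcard : Nat.card ↥(commutator G) = p ^ 3)
    (x : G) (hx : Nat.card ↥(xGsub x) = p ^ 2) :
    ∃ u v : G, commutator G = Subgroup.closure {⁅u, v⁆, ⁅x, u⁆, ⁅x, v⁆} := by
  haveI : Fact p.Prime := ⟨hp⟩
  -- all commutators are central
  have hc : ∀ a b k : G, ⁅a, b⁆ * k = k * ⁅a, b⁆ := by
    intro a b k
    have hmem : ⁅a, b⁆ ∈ commutator G :=
      Subgroup.commutator_mem_commutator (Subgroup.mem_top a) (Subgroup.mem_top b)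
    have h2 : ⁅(⁅a, b⁆), k⁆ ∈ (⊤ : Subgroup G).lowerCentralSeries 2 := by
      rw [show (2 : ℕ) = 1 + 1 from rfl, Subgroup.lowerCentralSeries_succ]
      exact Subgroup.commutator_mem_commutator (by rwa [Subgroup.top_lowerCentralSeries_one]) (Subgroup.mem_top k)
    rw [h3, Subgroup.mem_bot] at h2
    exact (commutatorElement_eq_one_iff_mul_comm.mp h2)
  -- exponent p
  have hep : ∀ c ∈ commutator G, c ^ p = 1 := by
    intro c hcm
    have : c ^ p ∈ sgPow (commutator G) p := Subgroup.subset_closure ⟨c, hcm, rfl⟩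
    rwa [hexp, Subgroup.mem_bot] at this
  have hxgW : ∀ g : G, ⁅x, g⁆ ∈ xGsub x := fun g => Subgroup.subset_closure ⟨g, rfl⟩
  have hcomm_mem : ∀ a b : G, ⁅a, b⁆ ∈ commutator G := fun a b =>
    Subgroup.commutator_mem_commutator (Subgroup.mem_top a) (Subgroup.mem_top b)
  have hWle : xGsub x ≤ commutator G := by
    rw [xGsub, Subgroup.closure_le]
    rintro y ⟨g, rfl⟩
    exact hcomm_mem x g
  -- find u₀ with ⁅x,u₀⁆ ≠ 1
  have hp1 : 1 < p := hp.one_lt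
  obtain ⟨u₀, hu₀⟩ : ∃ u₀ : G, ⁅x, u₀⁆ ≠ 1 := by
    by_contra hall
    push_neg at hall
    have : xGsub x ≤ ⊥ := by
      rw [xGsub, Subgroup.closure_le]
      rintro y ⟨g, rfl⟩
      simp [hall g]
    have hb : xGsub x = ⊥ := le_bot_iff.mp this
    rw [hb, Subgroup.card_bot] at hx
    nlinarith
  set Z := Subgroup.zpowers ⁅x, u₀⁆ with hZdef
  have hordu : orderOf ⁅x, u₀⁆ = p := orderOf_eq_prime (hep _ (hcomm_mem x u₀)) hu₀
  have hcardZ : Nat.card Z = p := by rw [hZdef, Nat.card_zpowers, hordu]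
  have hZle : Z ≤ xGsub x := Subgroup.zpowers_le.mpr (hxgW u₀)
  obtain ⟨v₀, hv₀⟩ : ∃ v₀ : G, ⁅x, v₀⁆ ∉ Z := by
    by_contra hall
    push_neg at hall
    have hle : xGsub x ≤ Z := by
      rw [xGsub, Subgroup.closure_le]
      rintro y ⟨g, rfl⟩
      exact hall g
    have : xGsub x = Z := le_antisymm hle hZle
    rw [this, hcardZ] at hx
    nlinarith
  -- the pair generates W
  have hpairW : Subgroup.closure {⁅x, u₀⁆, ⁅x, v₀⁆} = xGsub x := by
    have hS₂W : Subgroup.closure {⁅x, u₀⁆, ⁅x, v₀⁆} ≤ xGsub x := by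
      rw [Subgroup.closure_le]
      rintro y (rfl | rfl)
      · exact hxgW u₀
      · exact hxgW v₀
    have hZS₂ : Z ≤ Subgroup.closure {⁅x, u₀⁆, ⁅x, v₀⁆} :=
      Subgroup.zpowers_le.mpr (Subgroup.subset_closure (Set.mem_insert _ _))
    have hdvd1 : p ∣ Nat.card (Subgroup.closure {⁅x, u₀⁆, ⁅x, v₀⁆}) :=
      hcardZ ▸ Subgroup.card_dvd_of_le hZS₂
    have hdvd2 : Nat.card (Subgroup.closure {⁅x, u₀⁆, ⁅x, v₀⁆}) ∣ p ^ 2 :=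
      hx ▸ Subgroup.card_dvd_of_le hS₂W
    obtain ⟨k, hk2, hcS₂⟩ := (Nat.dvd_prime_pow hp).mp hdvd2
    interval_cases k
    · rw [hcS₂, pow_zero, Nat.dvd_one] at hdvd1; omega
    · exfalso
      have : Z = Subgroup.closure {⁅x, u₀⁆, ⁅x, v₀⁆} :=
        Subgroup.eq_of_le_of_card_ge hZS₂ (by rw [hcS₂, hcardZ, pow_one])
      exact hv₀ (this ▸ Subgroup.subset_closure (Set.mem_insert_of_mem _ rfl))
    · exact Subgroup.eq_of_le_of_card_ge hS₂W (by rw [hcS₂, hx])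
  -- Key lemma A: a good pair gives the conclusion
  have keyA : ∀ u v : G, Subgroup.closure {⁅x, u⁆, ⁅x, v⁆} = xGsub x → ⁅u, v⁆ ∉ xGsub x →
      commutator G = Subgroup.closure {⁅u, v⁆, ⁅x, u⁆, ⁅x, v⁆} := by
    intro u v hWuv hnm
    have hW3 : xGsub x ≤ Subgroup.closure {⁅u, v⁆, ⁅x, u⁆, ⁅x, v⁆} :=
      hWuv ▸ Subgroup.closure_mono (Set.subset_insert _ _)
    have hS₃G' : Subgroup.closure {⁅u, v⁆, ⁅x, u⁆, ⁅x, v⁆} ≤ commutator G := by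
      rw [Subgroup.closure_le]
      rintro y (rfl | rfl | rfl)
      · exact hcomm_mem u v
      · exact hcomm_mem x u
      · exact hcomm_mem x v
    have hdvd1 : p ^ 2 ∣ Nat.card (Subgroup.closure {⁅u, v⁆, ⁅x, u⁆, ⁅x, v⁆}) :=
      hx ▸ Subgroup.card_dvd_of_le hW3
    have hdvd2 : Nat.card (Subgroup.closure {⁅u, v⁆, ⁅x, u⁆, ⁅x, v⁆}) ∣ p ^ 3 :=
      hcard ▸ Subgroup.card_dvd_of_le hS₃G'
    obtain ⟨k, hk3, hcS₃⟩ := (Nat.dvd_prime_pow hp).mp hdvd2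
    have hk2 : 2 ≤ k := by
      rw [hcS₃] at hdvd1
      exact (Nat.pow_dvd_pow_iff_le_right hp1).mp hdvd1
    interval_cases k
    · exfalso
      have : xGsub x = Subgroup.closure {⁅u, v⁆, ⁅x, u⁆, ⁅x, v⁆} :=
        Subgroup.eq_of_le_of_card_ge hW3 (by rw [hcS₃, hx])
      exact hnm (this ▸ Subgroup.subset_closure (Set.mem_insert _ _))
    · exact (Subgroup.eq_of_le_of_card_ge hS₃G' (by rw [hcS₃, hcard])).symm
  -- Now suppose the conclusion fails
  by_contra hcon
  push_neg at hcon
  have hB : ∀ u v : G, Subgroup.closure {⁅x, u⁆, ⁅x, v⁆} = xGsub x → ⁅u, v⁆ ∈ xGsub x := by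
    intro u v h
    by_contra hn
    exact hcon u v (keyA u v h hn)
  have hshift : ∀ s : G, ⁅x, s⁆ = 1 → ∀ g : G, ⁅x, g * s⁆ = ⁅x, g⁆ := by
    intro s hs g; rw [comm_mul_right hc, hs, mul_one]
  have hmemW1 : ⁅u₀, v₀⁆ ∈ xGsub x := hB u₀ v₀ hpairW
  have hpair_swap : Subgroup.closure {⁅x, v₀⁆, ⁅x, u₀⁆} = xGsub x := by
    rw [Set.pair_comm]; exact hpairW
  have hK : ∀ s t : G, ⁅x, s⁆ = 1 → ⁅x, t⁆ = 1 → ⁅u₀ * s, v₀ * t⁆ ∈ xGsub x := by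
    intro s t hs ht
    apply hB
    rw [hshift s hs u₀, hshift t ht v₀]
    exact hpairW
  have hKsw : ∀ s t : G, ⁅x, s⁆ = 1 → ⁅x, t⁆ = 1 → ⁅v₀ * s, u₀ * t⁆ ∈ xGsub x := by
    intro s t hs ht
    apply hB
    rw [hshift s hs v₀, hshift t ht u₀]
    exact hpair_swap
  have hexpand : ∀ a b s t : G, ⁅a * s, b * t⁆ = ⁅a, b⁆ * ⁅a, t⁆ * (⁅s, b⁆ * ⁅s, t⁆) := by
    intro a b s t
    rw [comm_mul_left hc, comm_mul_right hc a, comm_mul_right hc s]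
  -- consequences
  have hKu : ∀ t : G, ⁅x, t⁆ = 1 → ⁅u₀, t⁆ ∈ xGsub x := by
    intro t ht
    have h1 := hK 1 t (commutatorElement_one_right x) ht
    rw [mul_one, comm_mul_right hc] at h1
    have h2 := mul_mem (inv_mem hmemW1) h1
    rwa [inv_mul_cancel_left] at h2
  have hKv : ∀ s : G, ⁅x, s⁆ = 1 → ⁅s, v₀⁆ ∈ xGsub x := by
    intro s hs
    have h1 := hK s 1 hs (commutatorElement_one_right x)
    rw [mul_one, comm_mul_left hc] at h1
    have h2 := mul_mem (inv_mem hmemW1) h1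
    rwa [inv_mul_cancel_left] at h2
  have hmemW1' : ⁅v₀, u₀⁆ ∈ xGsub x := by
    rw [← commutatorElement_inv]
    exact inv_mem hmemW1
  have hKvt : ∀ t : G, ⁅x, t⁆ = 1 → ⁅v₀, t⁆ ∈ xGsub x := by
    intro t ht
    have h1 := hKsw 1 t (commutatorElement_one_right x) ht
    rw [mul_one, comm_mul_right hc] at h1
    have h2 := mul_mem (inv_mem hmemW1') h1
    rwa [inv_mul_cancel_left] at h2
  have hKsu : ∀ s : G, ⁅x, s⁆ = 1 → ⁅s, u₀⁆ ∈ xGsub x := by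
    intro s hs
    have h1 := hKsw s 1 hs (commutatorElement_one_right x)
    rw [mul_one, comm_mul_left hc] at h1
    have h2 := mul_mem (inv_mem hmemW1') h1
    rwa [inv_mul_cancel_left] at h2
  have hKK : ∀ s t : G, ⁅x, s⁆ = 1 → ⁅x, t⁆ = 1 → ⁅s, t⁆ ∈ xGsub x := by
    intro s t hs ht
    have h1 := hK s t hs ht
    rw [hexpand] at h1
    have h2 := mul_mem (inv_mem (mul_mem hmemW1 (hKu t ht))) h1
    rw [inv_mul_cancel_left] at h2
    have h3 := mul_mem (inv_mem (hKv s hs)) h2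
    rwa [inv_mul_cancel_left] at h3
  -- decomposition of arbitrary elements
  have hcomm2 : Commute ⁅x, u₀⁆ ⁅x, v₀⁆ := hc x u₀ _
  have hdecomp : ∀ g : G, ∃ i j : ℤ, ∃ s : G, ⁅x, s⁆ = 1 ∧ g = u₀ ^ i * v₀ ^ j * s := by
    intro g
    obtain ⟨i, j, hg⟩ := mem_closure_pair_comm hcomm2 (by rw [hpairW]; exact hxgW g)
    refine ⟨i, j, (u₀ ^ i * v₀ ^ j)⁻¹ * g, ?_, (mul_inv_cancel_left _ _).symm⟩
    have e : (commHomR hc x) ((u₀ ^ i * v₀ ^ j)⁻¹ * g) =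
        (⁅x, u₀⁆ ^ i * ⁅x, v₀⁆ ^ j)⁻¹ * ⁅x, g⁆ := by
      simp only [map_mul, map_inv, map_zpow]; rfl
    show (commHomR hc x) ((u₀ ^ i * v₀ ^ j)⁻¹ * g) = 1
    rw [e, ← hg, inv_mul_cancel]
  -- every commutator lies in W
  have hall : ∀ g h : G, ⁅g, h⁆ ∈ xGsub x := by
    intro g h
    obtain ⟨i, j, s, hs, rfl⟩ := hdecomp g
    obtain ⟨k, l, t, ht, rfl⟩ := hdecomp h
    have key2 : ∀ a : G, ⁅a, u₀⁆ ∈ xGsub x → ⁅a, v₀⁆ ∈ xGsub x → ⁅a, t⁆ ∈ xGsub x →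
        ⁅a, u₀ ^ k * v₀ ^ l * t⁆ ∈ xGsub x := by
      intro a h1 h2 h3
      have e : ⁅a, u₀ ^ k * v₀ ^ l * t⁆ = ⁅a, u₀⁆ ^ k * ⁅a, v₀⁆ ^ l * ⁅a, t⁆ := by
        show (commHomR hc a) (u₀ ^ k * v₀ ^ l * t) = _
        simp only [map_mul, map_zpow]; rfl
      rw [e]
      exact mul_mem (mul_mem (zpow_mem h1 k) (zpow_mem h2 l)) h3
    have e2 : ⁅u₀ ^ i * v₀ ^ j * s, u₀ ^ k * v₀ ^ l * t⁆ =
        ⁅u₀, u₀ ^ k * v₀ ^ l * t⁆ ^ i * ⁅v₀, u₀ ^ k * v₀ ^ l * t⁆ ^ j *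
          ⁅s, u₀ ^ k * v₀ ^ l * t⁆ := by
      show (commHomL hc (u₀ ^ k * v₀ ^ l * t)) (u₀ ^ i * v₀ ^ j * s) = _
      simp only [map_mul, map_zpow]; rfl
    rw [e2]
    have huu : ⁅u₀, u₀⁆ ∈ xGsub x := by
      rw [commutatorElement_self]; exact one_mem _
    have hvv : ⁅v₀, v₀⁆ ∈ xGsub x := by
      rw [commutatorElement_self]; exact one_mem _
    exact mul_mem
      (mul_mem
        (zpow_mem (key2 u₀ huu hmemW1 (hKu t ht)) i)
        (zpow_mem (key2 v₀ hmemW1' hvv (hKvt t ht)) j))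
      (key2 s (hKsu s hs) (hKv s hs) (hKK s t hs ht))
  -- contradiction with the cardinalities
  have hfinal : commutator G ≤ xGsub x := by
    rw [commutator_def]
    exact Subgroup.commutator_le.mpr fun g _ h _ => hall g h
  have heq : commutator G = xGsub x := le_antisymm hfinal hWle
  rw [heq, hx] at hcard
  have h23 := Nat.pow_right_injective hp.two_le hcard
  omega
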